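/- Let T > 0 and a > 0, and define g(u) = −∑_{n=1}^∞ (−u)^n / (n/a + 1) for u ∈ (0, 1). Then g is strictly increasing on (0, 1). Consequently, under the linear decreasing driving δ(t) = δ_max − (ε/τ)t, the function G(t) = −∑_{n=1}^∞ (−exp(−δ(t)/T))^n / (nε/(κτT) + 1) is strictly increasing in t on [0, τ]. -/

import Mathlib

open Set MeasureTheory

noncomputable def auxF (a u : ℝ) : ℝ := ∫ t in (0:ℝ)..u, t ^ a / (1 + t)

lemma aux_contAt {a : ℝ} (ha : 0 < a) {x : ℝ} (hx : 0 ≤ x) :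
    ContinuousAt (fun t : ℝ => t ^ a / (1 + t)) x := by
  have h1 : ContinuousAt (fun t : ℝ => t ^ a) x :=
    Real.continuousAt_rpow_const x a (Or.inr ha.le)
  exact h1.div (by fun_prop) (by positivity)

lemma auxF_hasDerivAt {a : ℝ} (ha : 0 < a) {x : ℝ} (hx : 0 ≤ x) :
    HasDerivAt (auxF a) (x ^ a / (1 + x)) x := by
  apply intervalIntegral.integral_hasDerivAt_right
  · apply ContinuousOn.intervalIntegrable
    intro t ht
    have ht0 : 0 ≤ t := by
      rcases Set.mem_uIcc.1 ht with h | h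
      · exact h.1
      · linarith [h.1, h.2]
    exact (aux_contAt ha ht0).continuousWithinAt
  · refine ⟨Set.univ, Filter.univ_mem, ?_⟩
    apply Measurable.aestronglyMeasurable
    have hc : Continuous fun t : ℝ => t ^ a :=
      continuous_iff_continuousAt.2 fun x => Real.continuousAt_rpow_const x a (Or.inr ha.le)
    exact (hc.measurable).div (by fun_prop)
  · exact aux_contAt ha hx

lemma auxQ_pos {a : ℝ} (ha : 0 < a) {u : ℝ} (hu : u ∈ Ioo (0:ℝ) 1) :
    a * auxF a u < u ^ (a + 1) / (1 + u) := by
  set Q : ℝ → ℝ := fun x => x ^ (a + 1) / (1 + x) - a * auxF a x with hQ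
  have hder : ∀ x : ℝ, 0 ≤ x → HasDerivAt Q
      (((a + 1) * x ^ (a + 1 - 1) * (1 + x) - x ^ (a + 1) * 1) / (1 + x) ^ 2
        - a * (x ^ a / (1 + x))) x := by
    intro x hx
    have h1 : HasDerivAt (fun x : ℝ => x ^ (a + 1)) ((a + 1) * x ^ (a + 1 - 1)) x :=
      Real.hasDerivAt_rpow_const (Or.inr (by linarith))
    have h2 : HasDerivAt (fun x : ℝ => 1 + x) 1 x := by
      simpa using (hasDerivAt_id x).const_add 1
    exact (h1.div h2 (by positivity)).sub ((auxF_hasDerivAt ha hx).const_mul a)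
  have key : StrictMonoOn Q (Icc 0 1) := by
    apply strictMonoOn_of_hasDerivWithinAt_pos (convex_Icc 0 1)
      (f' := fun x => x ^ a / (1 + x) ^ 2)
    · intro x hx
      exact ((hder x hx.1).continuousAt).continuousWithinAt
    · intro x hx
      rw [interior_Icc] at hx
      refine ((hder x hx.1.le).congr_deriv ?_).hasDerivWithinAt
      have hx0 : 0 < x := hx.1
      have e1 : x ^ (a + 1 - 1) = x ^ a := by norm_num
      have e2 : x ^ (a + 1) = x ^ a * x := by
        rw [Real.rpow_add hx0, Real.rpow_one]
      rw [e1, e2]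
      have h1x : (0:ℝ) < 1 + x := by linarith
      field_simp
      ring
    · intro x hx
      rw [interior_Icc] at hx
      have h1 : (0:ℝ) < x ^ a := Real.rpow_pos_of_pos hx.1 a
      exact div_pos h1 (pow_pos (by linarith [hx.1]) 2)
  have h0 : Q 0 = 0 := by
    simp [hQ, auxF, Real.zero_rpow (by positivity : a + 1 ≠ 0)]
  have := key (left_mem_Icc.2 zero_le_one) ⟨hu.1.le, hu.2.le⟩ hu.1
  rw [h0] at this
  simpa [hQ, sub_pos] using this

lemma aux_g0_mono {a : ℝ} (ha : 0 < a) :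
    StrictMonoOn (fun u : ℝ => a * (u ^ (-a) * auxF a u)) (Ioo 0 1) := by
  have hder : ∀ x : ℝ, 0 < x → HasDerivAt (fun u : ℝ => a * (u ^ (-a) * auxF a u))
      (a * ((-a) * x ^ (-a - 1) * auxF a x + x ^ (-a) * (x ^ a / (1 + x)))) x := by
    intro x hx
    have h1 : HasDerivAt (fun u : ℝ => u ^ (-a)) ((-a) * x ^ (-a - 1)) x :=
      Real.hasDerivAt_rpow_const (Or.inl hx.ne')
    exact ((h1.mul (auxF_hasDerivAt ha hx.le)).const_mul a)
  apply strictMonoOn_of_hasDerivWithinAt_pos (convex_Ioo 0 1)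
    (f' := fun x => a * ((-a) * x ^ (-a - 1) * auxF a x + x ^ (-a) * (x ^ a / (1 + x))))
  · intro x hx
    exact ((hder x hx.1).continuousAt).continuousWithinAt
  · intro x hx
    rw [interior_Ioo] at hx
    exact (hder x hx.1).hasDerivWithinAt
  · intro x hx
    rw [interior_Ioo] at hx
    have hx0 : 0 < x := hx.1
    have hQ : a * auxF a x < x ^ (a + 1) / (1 + x) := auxQ_pos ha hx
    have e1 : x ^ (-a) * x ^ a = 1 := by
      rw [← Real.rpow_add hx0]; simp
    have e2 : x ^ (-a - 1) * x ^ (a + 1) = 1 := by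
      rw [← Real.rpow_add hx0]; norm_num
    have hp : (0:ℝ) < x ^ (-a - 1) := Real.rpow_pos_of_pos hx0 _
    have key : (-a) * x ^ (-a - 1) * auxF a x + x ^ (-a) * (x ^ a / (1 + x))
        = x ^ (-a - 1) * (x ^ (a + 1) / (1 + x) - a * auxF a x) := by
      have h1x : (0:ℝ) < 1 + x := by linarith
      field_simp
      nlinarith [e1, e2]
    rw [key]
    have := sub_pos.2 hQ
    positivity

lemma aux_tsum_eq {a : ℝ} (ha : 0 < a) {u : ℝ} (hu : u ∈ Ioo (0:ℝ) 1) :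
    (∑' n : ℕ, (-u) ^ (n + 1) / ((n + 1 : ℝ) / a + 1))
      = -(a * (u ^ (-a) * auxF a u)) := by
  obtain ⟨hu0, hu1⟩ := hu
  set F : ℕ → ℝ → ℝ := fun n t => (-1) ^ n * t ^ ((n : ℝ) + a) with hF
  -- integrability of each term
  have hint : ∀ n : ℕ, IntegrableOn (F n) (Ioc 0 u) := by
    intro n
    have hn : (0:ℝ) ≤ (n:ℝ) := Nat.cast_nonneg n
    have h := (intervalIntegral.intervalIntegrable_rpow' (r := (n : ℝ) + a) (a := 0) (b := u)
      (by linarith)).1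
    exact h.const_mul _
  -- norm bound
  have hbound : ∀ n : ℕ, (∫ t in Ioc (0:ℝ) u, ‖F n t‖) ≤ u ^ n * u := by
    intro n
    have hle : ∀ t ∈ Ioc (0:ℝ) u, ‖F n t‖ ≤ u ^ n := by
      intro t ht
      have ht0 : 0 < t := ht.1
      have htu : t ≤ u := ht.2
      have hrw : ‖F n t‖ = t ^ ((n : ℝ) + a) := by
        rw [hF]
        simp only [norm_mul, norm_pow, norm_neg, norm_one, one_pow, one_mul]
        exact Real.norm_of_nonneg (Real.rpow_nonneg ht0.le _)
      rw [hrw, Real.rpow_add ht0, Real.rpow_natCast]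
      have h1 : t ^ n ≤ u ^ n := pow_le_pow_left₀ ht0.le htu n
      have h2 : t ^ a ≤ 1 := Real.rpow_le_one ht0.le (le_trans htu hu1.le) ha.le
      calc t ^ n * t ^ a ≤ u ^ n * 1 := by
            apply mul_le_mul h1 h2 (Real.rpow_nonneg ht0.le _) (by positivity)
        _ = u ^ n := by ring
    calc (∫ t in Ioc (0:ℝ) u, ‖F n t‖) ≤ ∫ _ in Ioc (0:ℝ) u, u ^ n := by
          apply setIntegral_mono_on (hint n).norm (integrableOn_const measure_Ioc_lt_top.ne enorm_ne_top)
            measurableSet_Ioc hle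
      _ = u ^ n * u := by
          simp [Real.volume_Ioc]
          rw [max_eq_left hu0.le]; ring
  have hsum : Summable fun n : ℕ => ∫ t in Ioc (0:ℝ) u, ‖F n t‖ := by
    apply Summable.of_nonneg_of_le (fun n => integral_nonneg fun t => norm_nonneg _) hbound
    exact (summable_geometric_of_lt_one hu0.le hu1).mul_right u
  -- the swap
  have hswap : ∑' n : ℕ, (∫ t in Ioc (0:ℝ) u, F n t)
      = ∫ t in Ioc (0:ℝ) u, (∑' n : ℕ, F n t) :=
    integral_tsum_of_summable_integral_norm hint hsum
  -- pointwise sum of the series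
  have hpt : ∀ t ∈ Ioc (0:ℝ) u, (∑' n : ℕ, F n t) = t ^ a / (1 + t) := by
    intro t ht
    have ht0 : 0 < t := ht.1
    have ht1 : t < 1 := lt_of_le_of_lt ht.2 hu1
    have hterm : ∀ n : ℕ, F n t = (-t) ^ n * t ^ a := by
      intro n
      rw [hF]
      simp only []
      rw [Real.rpow_add ht0, Real.rpow_natCast, neg_pow]
      ring
    rw [tsum_congr hterm, tsum_mul_right, tsum_geometric_of_norm_lt_one
      (by rw [norm_neg, Real.norm_of_nonneg ht0.le]; exact ht1)]
    rw [sub_neg_eq_add]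
    rw [div_eq_mul_inv, mul_comm]
  -- value of each integral
  have hval : ∀ n : ℕ, (∫ t in Ioc (0:ℝ) u, F n t)
      = (-1) ^ n * (u ^ ((n : ℝ) + a + 1) / ((n : ℝ) + a + 1)) := by
    intro n
    rw [← intervalIntegral.integral_of_le hu0.le]
    rw [intervalIntegral.integral_const_mul]
    have hn : (0:ℝ) ≤ (n:ℝ) := Nat.cast_nonneg n
    rw [integral_rpow (Or.inl (by linarith))]
    rw [Real.zero_rpow (by positivity : (0:ℝ) < (n:ℝ)+a+1).ne']
    ring_nf
  -- auxF as set integral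
  have hFset : auxF a u = ∫ t in Ioc (0:ℝ) u, (∑' n : ℕ, F n t) := by
    rw [auxF, intervalIntegral.integral_of_le hu0.le]
    exact setIntegral_congr_fun measurableSet_Ioc fun t ht => (hpt t ht).symm
  have hterm : ∀ n : ℕ, (-u) ^ (n + 1) / ((n + 1 : ℝ) / a + 1)
      = -((a * u ^ (-a)) * ((-1 : ℝ) ^ n * (u ^ ((n:ℝ) + a + 1) / ((n:ℝ) + a + 1)))) := by
    intro n
    have hpow : u ^ ((n:ℝ) + a + 1) = u ^ (n + 1) * u ^ a := by
      rw [show (n:ℝ) + a + 1 = ((n+1 : ℕ) : ℝ) + a by push_cast; ring,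
        Real.rpow_add hu0, Real.rpow_natCast]
    have e1 : u ^ (-a) * u ^ a = 1 := by rw [← Real.rpow_add hu0]; simp
    have hd : (0:ℝ) < (n:ℝ) + a + 1 := by positivity
    have hneg : (-u) ^ (n+1) = -((-1:ℝ)^n * u ^ (n+1)) := by
      rw [neg_pow]; ring
    have hda : ((n:ℝ) + 1) / a + 1 = ((n:ℝ) + a + 1) / a := by field_simp; ring
    rw [hpow, hneg, hda, div_div_eq_mul_div]
    have hre : (a * u ^ (-a)) * ((-1:ℝ) ^ n * (u ^ (n+1) * u ^ a / ((n:ℝ)+a+1)))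
        = (-1:ℝ)^n * u^(n+1) * a * (u^(-a) * u^a) / ((n:ℝ)+a+1) := by ring
    rw [hre, e1]
    ring
  calc ∑' n : ℕ, (-u) ^ (n + 1) / ((n + 1 : ℝ) / a + 1)
      = ∑' n : ℕ, -((a * u ^ (-a)) * ((-1 : ℝ) ^ n * (u ^ ((n:ℝ) + a + 1) / ((n:ℝ) + a + 1)))) :=
        tsum_congr hterm
    _ = -((a * u ^ (-a)) * ∑' n : ℕ, ((-1 : ℝ) ^ n * (u ^ ((n:ℝ) + a + 1) / ((n:ℝ) + a + 1)))) := by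
        rw [tsum_neg, tsum_mul_left]
    _ = -((a * u ^ (-a)) * ∑' n : ℕ, (∫ t in Ioc (0:ℝ) u, F n t)) := by
        rw [tsum_congr fun n => (hval n).symm]
    _ = -(a * (u ^ (-a) * auxF a u)) := by
        rw [hswap, ← hFset]; ring

lemma aux_main {a : ℝ} (ha : 0 < a) :
    StrictMonoOn (fun u : ℝ => -∑' n : ℕ, (-u) ^ (n + 1) / ((n + 1 : ℝ) / a + 1))
      (Ioo 0 1) := by
  apply (aux_g0_mono ha).congr
  intro u hu
  simp only []
  rw [aux_tsum_eq ha hu, neg_neg]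

/-- for `T > 0` and `a > 0`, the function
`g(u) = −∑_{n=1}^∞ (−u)^n / (n/a + 1)` is strictly increasing on `(0, 1)`; consequently,
with the linear decreasing driving `δ(t) = δmax − (ε/τ) t` and `a = κτT/ε`, the function
`G(t) = −∑_{n=1}^∞ (−exp(−δ(t)/T))^n / (nε/(κτT) + 1)` is strictly increasing on `[0, τ]`. -/
theorem stmt13 (T a δmin δmax τ κ : ℝ)
    (hT : 0 < T) (ha : 0 < a)
    (hmin : 0 < δmin) (hlt : δmin < δmax) (hτ : 0 < τ) (hκ : 0 < κ) :
    StrictMonoOn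
      (fun u : ℝ => -∑' n : ℕ, (-u) ^ (n + 1) / ((n + 1 : ℝ) / a + 1))
      (Ioo 0 1) ∧
    StrictMonoOn
      (fun t : ℝ => -∑' n : ℕ,
        (-Real.exp (-(δmax - (δmax - δmin) / τ * t) / T)) ^ (n + 1) /
          ((n + 1 : ℝ) * (δmax - δmin) / (κ * τ * T) + 1))
      (Icc 0 τ) := by
  refine ⟨aux_main ha, ?_⟩
  have hε : 0 < δmax - δmin := sub_pos.2 hlt
  set b : ℝ := κ * τ * T / (δmax - δmin) with hb
  have hbpos : 0 < b := by positivity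
  have hfeq : (fun t : ℝ => -∑' n : ℕ,
        (-Real.exp (-(δmax - (δmax - δmin) / τ * t) / T)) ^ (n + 1) /
          ((n + 1 : ℝ) * (δmax - δmin) / (κ * τ * T) + 1))
      = (fun u : ℝ => -∑' n : ℕ, (-u) ^ (n + 1) / ((n + 1 : ℝ) / b + 1)) ∘
        (fun t : ℝ => Real.exp (-(δmax - (δmax - δmin) / τ * t) / T)) := by
    funext t
    simp only [Function.comp]
    congr 1
    refine tsum_congr fun n => ?_
    congr 1
    rw [hb, div_div_eq_mul_div]
  rw [hfeq]
  apply (aux_main hbpos).comp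
  · intro x hx y hy hxy
    apply Real.exp_lt_exp.2
    have h1 : (δmax - δmin) / τ * x < (δmax - δmin) / τ * y :=
      mul_lt_mul_of_pos_left hxy (div_pos hε hτ)
    exact (div_lt_div_iff_of_pos_right hT).2 (by linarith)
  · intro t ht
    constructor
    · exact Real.exp_pos _
    · rw [Real.exp_lt_one_iff]
      have h2 : (δmax - δmin) / τ * t ≤ δmax - δmin := by
        have := mul_le_mul_of_nonneg_left ht.2 (le_of_lt (div_pos hε hτ))
        rwa [div_mul_cancel₀ _ hτ.ne'] at this
      have h3 : 0 < δmax - (δmax - δmin) / τ * t := by linarith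
      exact div_neg_of_neg_of_pos (by linarith) hT
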